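/- arXiv:1702.01256 — 5 statements merged into one kernel-verified Lean document; each statement's English description precedes it below -/
import Mathlib

section
/- Let b : ℝ⁴ → ℝ⁴ be the Hodgkin–Huxley vector field b(p₁,p₂,p₃,v) = (α_m(v)(1−p₁) − β_m(v)p₁, α_h(v)(1−p₂) − β_h(v)p₂, α_n(v)(1−p₃) − β_n(v)p₃, C⁻¹(I − ḡ_Na·p₁³p₂(v − E_Na) − ḡ_K·p₃⁴(v − E_K) − ḡ_L·(v − E_L))), where C, ḡ_Na, ḡ_K, ḡ_L > 0 and I, E_Na, E_K, E_L ∈ ℝ are constants and the rate functions are strictly positive on ℝ. Then for every x in K = [0,1]³ × ℝ and every s ∈ ℝ⁴ satisfying ⟨s, y − x⟩ ≤ 0 for all y ∈ K, one has ⟨s, b(x)⟩ ≤ 0. -/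
/-- The Hodgkin–Huxley vector field on `ℝ⁴` (coordinates `(p₁, p₂, p₃, v)`),
with abstract rate functions. -/
noncomputable def hhVectorField (am bm ah bh an bn : ℝ → ℝ)
    (C gNa gK gL I ENa EK EL : ℝ) (x : Fin 4 → ℝ) : Fin 4 → ℝ :=
  ![am (x 3) * (1 - x 0) - bm (x 3) * x 0,
    ah (x 3) * (1 - x 1) - bh (x 3) * x 1,
    an (x 3) * (1 - x 2) - bn (x 3) * x 2,
    C⁻¹ * (I - gNa * (x 0) ^ 3 * x 1 * (x 3 - ENa)
             - gK * (x 2) ^ 4 * (x 3 - EK) - gL * (x 3 - EL))]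

/-- Drift part of the viability (tangency) condition for `K = [0,1]³ × ℝ`:
for every `x ∈ K` and every `s` in the normal cone `N_K(x)`,
one has `⟨s, b(x)⟩ ≤ 0`, where `b` is the Hodgkin–Huxley vector field. -/
theorem hh_drift_tangency (am bm ah bh an bn : ℝ → ℝ)
    (ham : ∀ v, 0 < am v) (hbm : ∀ v, 0 < bm v)
    (hah : ∀ v, 0 < ah v) (hbh : ∀ v, 0 < bh v)
    (han : ∀ v, 0 < an v) (hbn : ∀ v, 0 < bn v)
    (C gNa gK gL : ℝ) (hC : 0 < C) (hgNa : 0 < gNa) (hgK : 0 < gK) (hgL : 0 < gL)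
    (I ENa EK EL : ℝ)
    (x : Fin 4 → ℝ) (hx : ∀ i : Fin 3, x i.castSucc ∈ Set.Icc (0 : ℝ) 1)
    (s : Fin 4 → ℝ)
    (hs : ∀ y : Fin 4 → ℝ, (∀ i : Fin 3, y i.castSucc ∈ Set.Icc (0 : ℝ) 1) →
        ∑ j, s j * (y j - x j) ≤ 0) :
    ∑ j, s j * hhVectorField am bm ah bh an bn C gNa gK gL I ENa EK EL x j ≤ 0 := by
  -- key lemma: testing with updates in one coordinate
  have key : ∀ (j : Fin 4) (c : ℝ),
      (∀ i : Fin 3, Function.update x j c i.castSucc ∈ Set.Icc (0 : ℝ) 1) →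
      s j * (c - x j) ≤ 0 := by
    intro j c hc
    have h := hs (Function.update x j c) hc
    rwa [Fintype.sum_eq_single j
      (fun k hk => by rw [Function.update_of_ne hk]; ring),
      Function.update_self] at h
  -- coordinate facts
  have hcoord : ∀ i : Fin 3, s i.castSucc * (1 - x i.castSucc) ≤ 0 ∧
      0 ≤ s i.castSucc * x i.castSucc := by
    intro i
    constructor
    · have := key i.castSucc 1 (fun k => by
        by_cases h : k = i
        · subst h; simp [Function.update_self]
        · rw [Function.update_of_ne (by
            simpa [Fin.castSucc_inj] using h)]
          exact hx k)
      simpa using this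
    · have := key i.castSucc 0 (fun k => by
        by_cases h : k = i
        · subst h; simp [Function.update_self]
        · rw [Function.update_of_ne (by
            simpa [Fin.castSucc_inj] using h)]
          exact hx k)
      simp at this
      linarith [this]
  have h3 : s 3 = 0 := by
    have hne : ∀ i : Fin 3, (i.castSucc : Fin 4) ≠ 3 := by decide
    have h1 := key 3 (x 3 + 1) (fun k => by
      rw [Function.update_of_ne (hne k)]; exact hx k)
    have h2 := key 3 (x 3 - 1) (fun k => by
      rw [Function.update_of_ne (hne k)]; exact hx k)
    simp at h1 h2
    linarith
  have h0 := hcoord 0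
  have h1 := hcoord 1
  have h2 := hcoord 2
  have e0 : (Fin.castSucc (0 : Fin 3) : Fin 4) = 0 := rfl
  have e1 : (Fin.castSucc (1 : Fin 3) : Fin 4) = 1 := rfl
  have e2 : (Fin.castSucc (2 : Fin 3) : Fin 4) = 2 := rfl
  rw [e0] at h0; rw [e1] at h1; rw [e2] at h2
  have v := x 3
  simp only [hhVectorField, Fin.sum_univ_four, Matrix.cons_val_zero, Matrix.cons_val_one,
    Matrix.head_cons, Matrix.cons_val_two, Matrix.tail_cons, Matrix.cons_val_three, h3,
    zero_mul, add_zero]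
  have t0 : s 0 * (am (x 3) * (1 - x 0) - bm (x 3) * x 0) ≤ 0 := by
    nlinarith [h0.1, h0.2, (ham (x 3)).le, (hbm (x 3)).le]
  have t1 : s 1 * (ah (x 3) * (1 - x 1) - bh (x 3) * x 1) ≤ 0 := by
    nlinarith [h1.1, h1.2, (hah (x 3)).le, (hbh (x 3)).le]
  have t2 : s 2 * (an (x 3) * (1 - x 2) - bn (x 3) * x 2) ≤ 0 := by
    nlinarith [h2.1, h2.2, (han (x 3)).le, (hbn (x 3)).le]
  linarith
end

section
/- Let σ : ℝ⁴ → M_{4,3}(ℝ) be defined by σ(p₁,p₂,p₃,v) having diagonal entries σ_{i,i}(p,v) = σ_i·p_i(1 − p_i) for i ∈ {1,2,3} with constants σ₁, σ₂, σ₃ > 0, all other entries being zero (in particular the fourth row is identically zero). Then for every x in K = [0,1]³ × ℝ, every s ∈ ℝ⁴ satisfying ⟨s, y − x⟩ ≤ 0 for all y ∈ K, and every column index k ∈ {1,2,3}, one has ⟨s, σ_{·,k}(x)⟩ = 0, where σ_{·,k}(x) ∈ ℝ⁴ denotes the k-th column of σ(x). -/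
/-- The diffusion coefficient `σ : ℝ⁴ → M_{4,3}(ℝ)` of the fractional stochastic
Hodgkin–Huxley model: diagonal entries `σᵢ pᵢ (1 - pᵢ)` for `i ∈ {1,2,3}`, all
other entries (in particular the whole fourth row) equal to zero. -/
def hhSigma (s1 s2 s3 : ℝ) (x : Fin 4 → ℝ) : Matrix (Fin 4) (Fin 3) ℝ :=
  fun i k => if (i : ℕ) = (k : ℕ) then ![s1, s2, s3] k * x k.castSucc * (1 - x k.castSucc) else 0

lemma hh_normal_coord (x : Fin 4 → ℝ) (hx : ∀ i : Fin 3, x i.castSucc ∈ Set.Icc (0 : ℝ) 1)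
    (s : Fin 4 → ℝ)
    (hs : ∀ y : Fin 4 → ℝ, (∀ i : Fin 3, y i.castSucc ∈ Set.Icc (0 : ℝ) 1) →
        ∑ j, s j * (y j - x j) ≤ 0)
    (k : Fin 3) (t : ℝ) (ht : t ∈ Set.Icc (0 : ℝ) 1) :
    s k.castSucc * (t - x k.castSucc) ≤ 0 := by
  have h := hs (Function.update x k.castSucc t) ?_
  · have hsum : ∑ j, s j * (Function.update x k.castSucc t j - x j)
        = s k.castSucc * (t - x k.castSucc) := by
      rw [Finset.sum_eq_single k.castSucc]
      · simp
      · intro b _ hb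
        simp [Function.update_of_ne hb]
      · simp
    rwa [hsum] at h
  · intro i
    rcases eq_or_ne i.castSucc k.castSucc with h | h
    · rw [h, Function.update_self]; exact ht
    · rw [Function.update_of_ne h]; exact hx i

/-- Diffusion part of the viability (tangency) condition for `K = [0,1]³ × ℝ`:
for every `x ∈ K`, every `s` in the normal cone `N_K(x)` and every column index
`k`, one has `⟨s, σ_{·,k}(x)⟩ = 0`. -/
theorem hh_diffusion_tangency (s1 s2 s3 : ℝ) (hs1 : 0 < s1) (hs2 : 0 < s2) (hs3 : 0 < s3)
    (x : Fin 4 → ℝ) (hx : ∀ i : Fin 3, x i.castSucc ∈ Set.Icc (0 : ℝ) 1)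
    (s : Fin 4 → ℝ)
    (hs : ∀ y : Fin 4 → ℝ, (∀ i : Fin 3, y i.castSucc ∈ Set.Icc (0 : ℝ) 1) →
        ∑ j, s j * (y j - x j) ≤ 0)
    (k : Fin 3) :
    ∑ i, s i * hhSigma s1 s2 s3 x i k = 0 := by
  have hsum : ∑ i, s i * hhSigma s1 s2 s3 x i k
      = s k.castSucc * (![s1, s2, s3] k * x k.castSucc * (1 - x k.castSucc)) := by
    rw [Finset.sum_eq_single k.castSucc]
    · simp [hhSigma]
    · intro b _ hb
      have : (b : ℕ) ≠ (k : ℕ) := by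
        intro h; apply hb; apply Fin.ext; simpa using h
      simp [hhSigma, this]
    · simp
  rw [hsum]
  set a := x k.castSucc with ha
  rcases eq_or_lt_of_le (hx k).1 with h0 | h0
  · rw [show a = 0 from ha.trans h0.symm]; ring
  rcases eq_or_lt_of_le (hx k).2 with h1 | h1
  · rw [show a = 1 from ha.trans h1]; ring
  have hle : s k.castSucc ≤ 0 := by
    have := hh_normal_coord x hx s hs k 1 (by constructor <;> norm_num)
    nlinarith
  have hge : 0 ≤ s k.castSucc := by
    have := hh_normal_coord x hx s hs k 0 (by constructor <;> norm_num)
    nlinarith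
  have : s k.castSucc = 0 := le_antisymm hle hge
  rw [this]; ring
end

section
/- Let T > 0, let V : [0,T] → ℝ be continuous, let α, β : ℝ → ℝ be continuous with α(v) > 0 and β(v) > 0 for all v ∈ ℝ, and let n₀ ∈ [0,1]. Then the ordinary differential equation ṅ(t) = α(V(t))(1 − n(t)) − β(V(t))n(t) with n(0) = n₀ has a unique solution n on [0,T], and this solution satisfies n(t) ∈ [0,1] for every t ∈ [0,T]. -/
open Set intervalIntegral Real

/-- FTC helper: integral of a continuous function has derivative everywhere. -/
lemma hasDerivAt_integral_of_continuous {f : ℝ → ℝ} (hf : Continuous f) (t : ℝ) :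
    HasDerivAt (fun u => ∫ x in (0:ℝ)..u, f x) (f t) t :=
  integral_hasDerivAt_right (hf.intervalIntegrable _ _)
    (hf.stronglyMeasurableAtFilter _ _) hf.continuousAt

/-- Generic Hodgkin–Huxley gating equation: for a continuous voltage signal `V`
on `[0,T]`, continuous strictly positive rate functions `α, β` and an initial
condition `n₀ ∈ [0,1]`, the ODE `ṅ = α(V(t))(1 - n) - β(V(t)) n`, `n(0) = n₀`,
has a unique solution on `[0,T]`, and this solution takes values in `[0,1]`. -/
theorem gating_ode_existence_uniqueness_viability
    (T : ℝ) (hT : 0 < T) (V : ℝ → ℝ) (hV : ContinuousOn V (Set.Icc 0 T))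
    (α β : ℝ → ℝ) (hαc : Continuous α) (hβc : Continuous β)
    (hα : ∀ v, 0 < α v) (hβ : ∀ v, 0 < β v)
    (n₀ : ℝ) (hn₀ : n₀ ∈ Set.Icc (0 : ℝ) 1) :
    (∃ n : ℝ → ℝ, n 0 = n₀ ∧
        (∀ t ∈ Set.Icc 0 T,
          HasDerivWithinAt n (α (V t) * (1 - n t) - β (V t) * n t) (Set.Icc 0 T) t) ∧
        (∀ t ∈ Set.Icc 0 T, n t ∈ Set.Icc (0 : ℝ) 1)) ∧
    (∀ n₁ n₂ : ℝ → ℝ,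
        (n₁ 0 = n₀ ∧ ∀ t ∈ Set.Icc 0 T,
          HasDerivWithinAt n₁ (α (V t) * (1 - n₁ t) - β (V t) * n₁ t) (Set.Icc 0 T) t) →
        (n₂ 0 = n₀ ∧ ∀ t ∈ Set.Icc 0 T,
          HasDerivWithinAt n₂ (α (V t) * (1 - n₂ t) - β (V t) * n₂ t) (Set.Icc 0 T) t) →
        Set.EqOn n₁ n₂ (Set.Icc 0 T)) := by
  -- clamp time to [0,T] and define continuous rate coefficients on all of ℝ
  set proj : ℝ → ℝ := fun t => max 0 (min t T) with hproj
  have hprojc : Continuous proj := continuous_const.max (continuous_id.min continuous_const)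
  have hprojmem : ∀ t, proj t ∈ Icc 0 T := fun t =>
    ⟨le_max_left _ _, max_le (le_of_lt hT) (min_le_right _ _)⟩
  have hprojeq : ∀ t ∈ Icc 0 T, proj t = t := fun t ht => by
    simp [hproj, min_eq_left ht.2, max_eq_right ht.1]
  have hVc : Continuous (fun t => V (proj t)) := hV.comp_continuous hprojc hprojmem
  set a : ℝ → ℝ := fun t => α (V (proj t)) with ha
  set b : ℝ → ℝ := fun t => β (V (proj t)) with hb
  have hac : Continuous a := hαc.comp hVc
  have hbc : Continuous b := hβc.comp hVc
  have hapos : ∀ t, 0 < a t := fun t => hα _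
  have hbpos : ∀ t, 0 < b t := fun t => hβ _
  have haeq : ∀ t ∈ Icc 0 T, a t = α (V t) := fun t ht => by rw [ha]; simp [hprojeq t ht]
  have hbeq : ∀ t ∈ Icc 0 T, b t = β (V t) := fun t ht => by rw [hb]; simp [hprojeq t ht]
  constructor
  · -- Existence via integrating factor
    set Φ : ℝ → ℝ := fun t => ∫ s in (0:ℝ)..t, (a s + b s) with hΦ
    have hΦd : ∀ t, HasDerivAt Φ (a t + b t) t :=
      hasDerivAt_integral_of_continuous (hac.add hbc)
    have hΦ0 : Φ 0 = 0 := by simp [hΦ]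
    have hΦc : Continuous Φ := continuous_iff_continuousAt.mpr fun t => (hΦd t).continuousAt
    set g : ℝ → ℝ := fun s => Real.exp (Φ s) * a s with hg
    have hgc : Continuous g := hΦc.rexp.mul hac
    set I : ℝ → ℝ := fun t => ∫ s in (0:ℝ)..t, g s with hI
    have hId : ∀ t, HasDerivAt I (g t) t := hasDerivAt_integral_of_continuous hgc
    set n : ℝ → ℝ := fun t => Real.exp (-Φ t) * (n₀ + I t) with hn
    have hn0 : n 0 = n₀ := by simp [hn, hΦ0, hI]
    have hnd : ∀ t, HasDerivAt n (a t * (1 - n t) - b t * n t) t := by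
      intro t
      have h1 : HasDerivAt (fun t => Real.exp (-Φ t)) (-(a t + b t) * Real.exp (-Φ t)) t := by
        have := ((hΦd t).neg).exp
        refine this.congr_deriv ?_; simp only [Pi.neg_apply]; ring
      have h2 : HasDerivAt (fun t => n₀ + I t) (g t) t := (hId t).const_add n₀
      have h3 := h1.mul h2
      refine h3.congr_deriv ?_
      have hexp : Real.exp (-Φ t) * Real.exp (Φ t) = 1 := by
        rw [← Real.exp_add]; simp
      simp only [hn, hg]
      linear_combination (a t) * hexp
    have hΦnonneg : ∀ t ∈ Icc 0 T, 0 ≤ Φ t := fun t ht =>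
      intervalIntegral.integral_nonneg ht.1
        (fun s _ => add_nonneg (hapos s).le (hbpos s).le)
    have hInonneg : ∀ t ∈ Icc 0 T, 0 ≤ I t := fun t ht =>
      intervalIntegral.integral_nonneg ht.1
        (fun s _ => mul_nonneg (Real.exp_nonneg _) (hapos s).le)
    refine ⟨n, hn0, fun t ht => ?_, fun t ht => ?_⟩
    · have := (hnd t).hasDerivWithinAt (s := Icc 0 T)
      rwa [haeq t ht, hbeq t ht] at this
    · constructor
      · have : 0 ≤ n₀ + I t := by linarith [hInonneg t ht, hn₀.1]
        exact mul_nonneg (Real.exp_nonneg _) this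
      · -- key: n₀ + I t ≤ exp (Φ t)
        have hkey : n₀ + I t ≤ Real.exp (Φ t) := by
          have hftc : Real.exp (Φ t) - Real.exp (Φ 0) =
              ∫ s in (0:ℝ)..t, (a s + b s) * Real.exp (Φ s) := by
            rw [← intervalIntegral.integral_eq_sub_of_hasDerivAt
              (f := fun s => Real.exp (Φ s))
              (f' := fun s => (a s + b s) * Real.exp (Φ s))
              (fun s _ => by
                have := ((hΦd s).exp); refine this.congr_deriv ?_; ring)
              (((hac.add hbc).mul hΦc.rexp).intervalIntegrable _ _)]
          have hmono : I t ≤ ∫ s in (0:ℝ)..t, (a s + b s) * Real.exp (Φ s) := by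
            apply intervalIntegral.integral_mono_on ht.1
              (hgc.intervalIntegrable _ _)
              (((hac.add hbc).mul hΦc.rexp).intervalIntegrable _ _)
            intro s _
            have hb' := (hbpos s).le
            have he := Real.exp_pos (Φ s)
            simp only [hg, Pi.mul_apply, Pi.add_apply]
            nlinarith [mul_nonneg hb' he.le]
          rw [hΦ0, Real.exp_zero] at hftc
          linarith [hn₀.2]
        calc n t = Real.exp (-Φ t) * (n₀ + I t) := rfl
          _ ≤ Real.exp (-Φ t) * Real.exp (Φ t) :=
              mul_le_mul_of_nonneg_left hkey (Real.exp_nonneg _)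
          _ = 1 := by rw [← Real.exp_add]; simp
  · -- Uniqueness via Grönwall
    intro n₁ n₂ ⟨h10, h1d⟩ ⟨h20, h2d⟩
    -- Lipschitz bound
    obtain ⟨K, hK⟩ : ∃ K : ℝ, ∀ t, a t + b t ≤ K := by
      obtain ⟨M, hM⟩ := isCompact_Icc.exists_bound_of_continuousOn
        (f := fun t => a t + b t) (s := Icc (0:ℝ) T) (hac.add hbc).continuousOn
      refine ⟨M, fun t => ?_⟩
      have h2 : a (proj t) + b (proj t) = a t + b t := by
        simp only [ha, hb, hprojeq _ (hprojmem t)]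
      calc a t + b t = a (proj t) + b (proj t) := h2.symm
        _ ≤ ‖a (proj t) + b (proj t)‖ := le_abs_self _
        _ ≤ M := hM _ (hprojmem t)
    set v : ℝ → ℝ → ℝ := fun t x => a t * (1 - x) - b t * x with hv
    have hKnn : 0 ≤ K := le_trans (add_nonneg (hapos 0).le (hbpos 0).le) (hK 0)
    have hlip : ∀ t, LipschitzWith (Real.toNNReal K) (v t) := by
      intro t
      rw [lipschitzWith_iff_dist_le_mul]
      intro x y
      simp only [Real.dist_eq, hv]
      rw [Real.coe_toNNReal _ hKnn]
      have : a t * (1 - x) - b t * x - (a t * (1 - y) - b t * y) =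
          -((a t + b t) * (x - y)) := by ring
      rw [this, abs_neg, abs_mul]
      have h1 : |a t + b t| = a t + b t := abs_of_pos (add_pos (hapos t) (hbpos t))
      rw [h1]
      exact mul_le_mul_of_nonneg_right (hK t) (abs_nonneg _)
    -- convert hypotheses to the form needed
    have hderiv : ∀ (f : ℝ → ℝ), (∀ t ∈ Icc 0 T,
        HasDerivWithinAt f (α (V t) * (1 - f t) - β (V t) * f t) (Icc 0 T) t) →
        (∀ t ∈ Ico 0 T, HasDerivWithinAt f (v t (f t)) (Ici t) t) := by
      intro f hf t ht
      have h1 : HasDerivWithinAt f (α (V t) * (1 - f t) - β (V t) * f t) (Ici t) t := by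
        apply (hf t ⟨ht.1, ht.2.le⟩).mono_of_mem_nhdsWithin
        exact Filter.mem_of_superset (Icc_mem_nhdsGE_of_mem ⟨le_refl t, ht.2⟩)
          (Icc_subset_Icc_left ht.1)
      show HasDerivWithinAt f (a t * (1 - f t) - b t * f t) (Ici t) t
      rwa [haeq t ⟨ht.1, ht.2.le⟩, hbeq t ⟨ht.1, ht.2.le⟩]
    have hcont : ∀ (f : ℝ → ℝ), (∀ t ∈ Icc 0 T,
        HasDerivWithinAt f (α (V t) * (1 - f t) - β (V t) * f t) (Icc 0 T) t) →
        ContinuousOn f (Icc 0 T) := fun f hf t ht =>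
      (hf t ht).continuousWithinAt
    exact ODE_solution_unique (v := v) hlip (hcont n₁ h1d) (hderiv n₁ h1d)
      (hcont n₂ h2d) (hderiv n₂ h2d) (h10.trans h20.symm)
end

section
/- Let K ⊂ ℝ^d be a closed convex set and let b : ℝ^d → ℝ^d be continuously differentiable and Lipschitz continuous, so that for every x₀ ∈ ℝ^d the equation Ẋ(t) = b(X(t)), X(0) = x₀ has a unique solution on [0,T]. Then the following are equivalent: (i) for every x₀ ∈ K, the solution satisfies X(t) ∈ K for all t ∈ [0,T]; (ii) for every x ∈ ∂K and every s ∈ ℝ^d with ⟨s, y − x⟩ ≤ 0 for all y ∈ K, one has ⟨s, b(x)⟩ ≤ 0. -/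
open Set Metric Filter Real

section helpers

set_option linter.unusedSectionVars false
variable {E : Type*} [NormedAddCommGroup E] [NormedSpace ℝ E] [CompleteSpace E]

lemma my_hasDerivWithinAt_singleton (f : ℝ → E) (c : E) (x : ℝ) :
    HasDerivWithinAt f c {x} x := by
  rw [hasDerivWithinAt_iff_tendsto_slope, Set.diff_self, nhdsWithin_empty]
  exact tendsto_bot

lemma my_hasDerivWithinAt_of_nmem_closure {f : ℝ → E} {c : E} {s : Set ℝ} {x : ℝ}
    (h : x ∉ closure s) : HasDerivWithinAt f c s x :=
  hasDerivWithinAt_iff_hasFDerivWithinAt.mpr (HasFDerivWithinAt.of_notMem_closure h)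

lemma my_hasDerivWithinAt_Ici {f : ℝ → E} {c : E} {a b t : ℝ} (ht : t ∈ Ico a b)
    (h : HasDerivWithinAt f c (Icc a b) t) : HasDerivWithinAt f c (Ici t) t :=
  h.mono_of_mem_nhdsWithin (Icc_mem_nhdsGE_of_mem ht)

lemma my_gronwallBound_mono {K ε : ℝ} (hK : 0 ≤ K) (hε : 0 ≤ ε) {x y : ℝ}
    (hx : 0 ≤ x) (hxy : x ≤ y) : gronwallBound 0 K ε x ≤ gronwallBound 0 K ε y := by
  rcases eq_or_ne K 0 with h | h
  · subst h; rw [gronwallBound_K0]; simp only; nlinarith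
  · have hK' : 0 < K := lt_of_le_of_ne hK (Ne.symm h)
    rw [gronwallBound_of_K_ne_0 h]
    simp only [zero_mul, zero_add]
    have h1 : Real.exp (K * x) ≤ Real.exp (K * y) := Real.exp_le_exp.2 (by nlinarith)
    have h2 : 0 ≤ ε / K := by positivity
    nlinarith

lemma my_apriori {b : E → E} {L : NNReal} (hbL : LipschitzWith L b) (x₀ : E) {τ : ℝ}
    {X : ℝ → E} (hX0 : X 0 = x₀)
    (hX : ∀ t ∈ Icc 0 τ, HasDerivWithinAt X (b (X t)) (Icc 0 τ) t) :
    ∀ t ∈ Icc 0 τ, ‖X t - x₀‖ ≤ gronwallBound 0 L ‖b x₀‖ t := by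
  have hcont : ContinuousOn (fun t => X t - x₀) (Icc 0 τ) :=
    ContinuousOn.sub (fun t ht => (hX t ht).continuousWithinAt) continuousOn_const
  have := norm_le_gronwallBound_of_norm_deriv_right_le (f := fun t => X t - x₀)
    (f' := fun t => b (X t)) (δ := 0) (K := L) (ε := ‖b x₀‖) (a := 0) (b := τ)
    hcont
    (fun t ht => my_hasDerivWithinAt_Ici ht ((hX t (Ico_subset_Icc_self ht)).sub_const x₀))
    (by simp [hX0])
    (fun t ht => by
      have h1 : ‖b (X t) - b x₀‖ ≤ L * ‖X t - x₀‖ := by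
        simpa [dist_eq_norm] using hbL.dist_le_mul (X t) x₀
      calc ‖b (X t)‖ ≤ ‖b (X t) - b x₀‖ + ‖b x₀‖ := by
            simpa using norm_add_le (b (X t) - b x₀) (b x₀)
        _ ≤ L * ‖X t - x₀‖ + ‖b x₀‖ := by linarith)
  intro t ht
  simpa using this t ht

lemma my_global_existence {b : E → E} {L : NNReal}
    (hbL : LipschitzWith L b) (x₀ : E) {T : ℝ} (hT : 0 < T) :
    ∃ X : ℝ → E, X 0 = x₀ ∧ ∀ t ∈ Icc 0 T, HasDerivWithinAt X (b (X t)) (Icc 0 T) t := by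
  set R₀ : ℝ := gronwallBound 0 L ‖b x₀‖ T with hR₀
  have hR₀0 : 0 ≤ R₀ := by
    have := my_gronwallBound_mono (K := (L:ℝ)) (ε := ‖b x₀‖) L.2 (norm_nonneg _)
      (le_refl (0:ℝ)) hT.le
    simpa [gronwallBound_x0] using this
  set Cs : ℝ := ‖b x₀‖ + L * R₀ + L with hCs
  have hCs0 : 0 ≤ Cs := by positivity
  set ε : ℝ := min T (1/(Cs+1)) with hε
  have hε0 : 0 < ε := lt_min hT (by positivity)
  -- main induction
  have main : ∀ k : ℕ, ∃ X : ℝ → E, X 0 = x₀ ∧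
      ∀ t ∈ Icc 0 (min (k*ε) T), HasDerivWithinAt X (b (X t)) (Icc 0 (min (k*ε) T)) t := by
    intro k
    induction k with
    | zero =>
        refine ⟨fun _ => x₀, rfl, ?_⟩
        have : min ((0:ℕ)*ε) T = 0 := by simp [hT.le]
        rw [this]
        intro t ht
        simp only [Icc_self] at ht ⊢
        rw [mem_singleton_iff] at ht
        subst ht
        exact my_hasDerivWithinAt_singleton _ _ _
    | succ k ih =>
        obtain ⟨X, hX0, hX⟩ := ih
        rcases le_or_gt T (k*ε) with hTk | hTk
        · have he : min ((k+1:ℕ)*ε) T = min ((k:ℕ)*ε) T := by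
            push_cast
            rw [min_eq_right hTk, min_eq_right]
            nlinarith
          rw [he]; exact ⟨X, hX0, hX⟩
        · set τ : ℝ := min ((k:ℕ)*ε) T with hτ
          have hτeq : τ = k*ε := min_eq_left hTk.le
          set τ' : ℝ := min (((k:ℕ)+1)*ε) T with hτ'
          have hτ0 : 0 ≤ τ := le_min (by positivity) hT.le
          have hττ' : τ < τ' := by
            rw [hτeq]
            apply lt_min _ hTk
            nlinarith
          have hτ'T : τ' ≤ T := min_le_right _ _
          have hstep : τ' - τ ≤ ε := by
            rw [hτeq]
            have : τ' ≤ (k+1)*ε := min_le_left _ _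
            nlinarith
          -- a priori bound at τ
          have hbound : ‖X τ - x₀‖ ≤ R₀ := by
            refine le_trans (my_apriori hbL x₀ hX0 hX τ ⟨hτ0, le_rfl⟩) ?_
            exact my_gronwallBound_mono L.2 (norm_nonneg _) hτ0 (min_le_right _ _)
          -- bound on b near X τ
          have hnorm : ∀ y ∈ closedBall (X τ) 1, ‖b y‖ ≤ Cs := by
            intro y hy
            have h1 : ‖b y - b x₀‖ ≤ L * ‖y - x₀‖ := by
              simpa [dist_eq_norm] using hbL.dist_le_mul y x₀
            have h2 : ‖y - x₀‖ ≤ 1 + R₀ := by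
              calc ‖y - x₀‖ ≤ ‖y - X τ‖ + ‖X τ - x₀‖ := by
                    simpa using norm_add_le (y - X τ) (X τ - x₀)
                _ ≤ 1 + R₀ := by
                    have := mem_closedBall_iff_norm.mp hy
                    linarith
            calc ‖b y‖ ≤ ‖b y - b x₀‖ + ‖b x₀‖ := by
                  simpa using norm_add_le (b y - b x₀) (b x₀)
              _ ≤ L * (1 + R₀) + ‖b x₀‖ := by nlinarith [h1, h2, mul_le_mul_of_nonneg_left h2 L.coe_nonneg]
              _ = Cs := by rw [hCs]; ring
          have hpl : IsPicardLindelof (fun _ y => b y) (tmin := τ) (tmax := τ') ⟨τ, le_rfl, hττ'.le⟩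
              (X τ) 1 0 ⟨Cs, hCs0⟩ L :=
            { lipschitzOnWith := fun _ _ => hbL.lipschitzOnWith
              continuousOn := fun _ _ => continuousOn_const
              norm_le := fun _ _ y hy => hnorm y (by simpa using hy)
              mul_max_le := by
                show Cs * max (τ' - τ) (τ - τ) ≤ (1:ℝ) - 0
                rw [sub_self, sub_zero, max_eq_left (by linarith)]
                calc Cs * (τ' - τ) ≤ Cs * ε := by nlinarith
                  _ ≤ Cs * (1/(Cs+1)) := by
                      have : ε ≤ 1/(Cs+1) := min_le_right _ _
                      nlinarith
                  _ ≤ 1 := by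
                      rw [mul_one_div, div_le_one (by linarith)]
                      linarith }
          obtain ⟨Z, hZ0, hZ⟩ := hpl.exists_eq_forall_mem_Icc_hasDerivWithinAt₀
          push_cast
          refine ⟨fun t => if t ≤ τ then X t else Z t, by simp [hτ0, hX0], ?_⟩
          intro t ht
          set Y : ℝ → E := fun t => if t ≤ τ then X t else Z t with hY
          have hYX : ∀ y ∈ Icc 0 τ, Y y = X y := fun y hy => if_pos hy.2
          have hYZ : ∀ y ∈ Icc τ τ', Y y = Z y := by
            intro y hy
            by_cases h : y ≤ τ
            · have : y = τ := le_antisymm h hy.1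
              subst this
              simp [hY, hZ0]
            · simp [hY, h]
          have hunion : Icc (0:ℝ) τ' = Icc 0 τ ∪ Icc τ τ' :=
            (Icc_union_Icc_eq_Icc hτ0 hττ'.le).symm
          rw [hunion] at ht ⊢
          have hd1 : HasDerivWithinAt Y (b (Y t)) (Icc 0 τ) t := by
            by_cases h : t ≤ τ
            · have ht' : t ∈ Icc 0 τ := by
                rcases ht with h1 | h1
                · exact h1
                · exact ⟨hτ0.trans h1.1, h⟩
              have := (hX t ht').congr hYX (hYX t ht')
              rw [hYX t ht']
              exact this
            · apply my_hasDerivWithinAt_of_nmem_closure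
              rw [isClosed_Icc.closure_eq]
              intro hc
              exact h hc.2
          have hd2 : HasDerivWithinAt Y (b (Y t)) (Icc τ τ') t := by
            by_cases h : τ ≤ t
            · have ht' : t ∈ Icc τ τ' := by
                rcases ht with h1 | h1
                · have : t = τ := le_antisymm h1.2 h
                  subst this
                  exact ⟨le_rfl, hττ'.le⟩
                · exact h1
              have := (hZ t ht').congr hYZ (hYZ t ht')
              rw [hYZ t ht']
              exact this
            · apply my_hasDerivWithinAt_of_nmem_closure
              rw [isClosed_Icc.closure_eq]
              intro hc
              exact h hc.1
          exact hd1.union hd2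
  -- conclude
  set n : ℕ := ⌈T/ε⌉₊ with hn
  obtain ⟨X, hX0, hX⟩ := main n
  have hTn : T ≤ n * ε := by
    have := Nat.le_ceil (T/ε)
    rw [div_le_iff₀ hε0] at this
    linarith [this]
  have : min ((n:ℕ)*ε) T = T := min_eq_right hTn
  rw [this] at hX
  exact ⟨X, hX0, hX⟩
end helpers

open scoped RealInnerProductSpace Topology
open Filter Set Metric

/-- Deterministic invariance characterization (Coutin–Marie, case `σ ≡ 0`):
for a closed convex set `K ⊆ ℝ^d` and a `C¹`, Lipschitz vector field `b`, all
solutions of `Ẋ = b(X)` starting in `K` remain in `K` on `[0,T]` if and only if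
`⟨s, b(x)⟩ ≤ 0` for every `x ∈ ∂K` and every `s` in the normal cone to `K` at `x`. -/
theorem ode_invariance_iff_normal_cone_tangency
    (d : ℕ) (T : ℝ) (hT : 0 < T)
    (K : Set (EuclideanSpace ℝ (Fin d))) (hKcl : IsClosed K) (hKconv : Convex ℝ K)
    (b : EuclideanSpace ℝ (Fin d) → EuclideanSpace ℝ (Fin d))
    (hb : ContDiff ℝ 1 b) (L : NNReal) (hbL : LipschitzWith L b) :
    (∀ x₀ ∈ K, ∀ X : ℝ → EuclideanSpace ℝ (Fin d), X 0 = x₀ →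
        (∀ t ∈ Set.Icc 0 T, HasDerivWithinAt X (b (X t)) (Set.Icc 0 T) t) →
        ∀ t ∈ Set.Icc 0 T, X t ∈ K)
    ↔ (∀ x ∈ frontier K, ∀ s : EuclideanSpace ℝ (Fin d),
        (∀ y ∈ K, ⟪s, y - x⟫ ≤ 0) → ⟪s, b x⟫ ≤ 0) := by
  constructor
  · -- invariance implies tangency
    intro hinv x hx s hs
    have hxK : x ∈ K := hKcl.frontier_subset hx
    obtain ⟨X, hX0, hX⟩ := my_global_existence hbL x hT
    have hXK : ∀ t ∈ Set.Icc 0 T, X t ∈ K := hinv x hxK X hX0 hX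
    have hd : HasDerivWithinAt (fun t => ⟪s, X t - x⟫) ⟪s, b x⟫ (Set.Icc 0 T) 0 := by
      have h1 : HasDerivWithinAt (fun t => X t - x) (b (X 0)) (Set.Icc 0 T) 0 :=
        (hX 0 ⟨le_rfl, hT.le⟩).sub_const x
      have h2 := (hasDerivWithinAt_const (0:ℝ) (Set.Icc 0 T) s).inner ℝ h1
      simpa [hX0] using h2
    rw [hasDerivWithinAt_iff_tendsto_slope, Set.Icc_diff_left] at hd
    have hnb : (𝓝[Set.Ioc (0:ℝ) T] 0).NeBot := by
      rw [nhdsWithin_Ioc_eq_nhdsGT hT]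
      infer_instance
    refine le_of_tendsto hd ?_
    filter_upwards [self_mem_nhdsWithin] with z hz
    have h0 : ⟪s, X z - x⟫ ≤ 0 := hs (X z) (hXK z ⟨hz.1.le, hz.2⟩)
    rw [slope_def_field]
    have hφ0 : ⟪s, X 0 - x⟫ = 0 := by simp [hX0]
    rw [hφ0, sub_zero, sub_zero]
    exact div_nonpos_iff.mpr (Or.inr ⟨h0, hz.1.le⟩)
  · -- tangency implies invariance
    intro htan x₀ hx₀ X hX0 hX
    have hne : K.Nonempty := ⟨x₀, hx₀⟩
    have hXc : ContinuousOn X (Set.Icc 0 T) := fun t ht => (hX t ht).continuousWithinAt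
    choose Q hQK hQd using fun y => hKcl.exists_infDist_eq_dist hne y
    have hnormal : ∀ u, ∀ y ∈ K, ⟪u - Q u, y - Q u⟫ ≤ 0 := by
      intro u
      refine (norm_eq_iInf_iff_real_inner_le_zero hKconv (hQK u)).1 ?_
      rw [← dist_eq_norm, ← hQd u, Metric.infDist_eq_iInf]
      exact iInf_congr (fun y => dist_eq_norm u y)
    have htang : ∀ u, ⟪u - Q u, b (Q u)⟫ ≤ 0 := by
      intro u
      by_cases hv : u - Q u = 0
      · simp [hv]
      · have hvn : 0 < ‖u - Q u‖ := norm_pos_iff.2 hv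
        have hfr : Q u ∈ frontier K := by
          rw [hKcl.frontier_eq]
          refine ⟨hQK u, fun hint => ?_⟩
          obtain ⟨r, hr0, hball⟩ := Metric.isOpen_iff.1 isOpen_interior (Q u) hint
          set v := u - Q u with hvdef
          set c : ℝ := min 1 (r / (2 * ‖v‖)) with hc
          have hc0 : 0 < c := lt_min one_pos (by positivity)
          have hc1 : c ≤ 1 := min_le_left _ _
          have hcr : c * ‖v‖ < r := by
            have h1 : c ≤ r / (2 * ‖v‖) := min_le_right _ _
            have h2 : c * ‖v‖ ≤ r / 2 := by
              rw [le_div_iff₀ (by positivity : (0:ℝ) < 2 * ‖v‖)] at h1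
              nlinarith
            linarith
          have hqK : Q u + c • v ∈ K := by
            refine interior_subset (hball ?_)
            rw [Metric.mem_ball, dist_eq_norm]
            simpa [norm_smul, abs_of_pos hc0] using hcr
          have hle : Metric.infDist u K ≤ dist u (Q u + c • v) :=
            Metric.infDist_le_dist_of_mem hqK
          rw [hQd u] at hle
          have hd1 : dist u (Q u + c • v) = (1 - c) * ‖v‖ := by
            rw [dist_eq_norm]
            have : u - (Q u + c • v) = (1 - c) • v := by
              rw [sub_smul, one_smul, hvdef]
              abel
            rw [this, norm_smul, Real.norm_eq_abs, abs_of_nonneg (by linarith)]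
          rw [hd1, dist_eq_norm, ← hvdef] at hle
          nlinarith
        exact htan (Q u) hfr (u - Q u) (hnormal u)
    set g : ℝ → ℝ := fun t => Metric.infDist (X t) K ^ 2 with hg
    set F : ℝ → ℝ := fun t => 2 * ⟪X t - Q (X t), b (X t)⟫ with hF
    have hgval : ∀ t, g t = ‖X t - Q (X t)‖ ^ 2 := by
      intro t
      rw [hg]
      simp only
      rw [hQd (X t), dist_eq_norm]
    have hbound : ∀ t, F t ≤ 2 * L * g t + 0 := by
      intro t
      have h1 : ⟪X t - Q (X t), b (X t) - b (Q (X t))⟫ ≤ L * ‖X t - Q (X t)‖ ^ 2 := by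
        calc ⟪X t - Q (X t), b (X t) - b (Q (X t))⟫
            ≤ ‖X t - Q (X t)‖ * ‖b (X t) - b (Q (X t))‖ := real_inner_le_norm _ _
          _ ≤ ‖X t - Q (X t)‖ * (L * ‖X t - Q (X t)‖) := by
              have hlip : ‖b (X t) - b (Q (X t))‖ ≤ L * ‖X t - Q (X t)‖ := by
                simpa [dist_eq_norm] using hbL.dist_le_mul (X t) (Q (X t))
              nlinarith [norm_nonneg (X t - Q (X t))]
          _ = L * ‖X t - Q (X t)‖ ^ 2 := by ring
      have h2 : ⟪X t - Q (X t), b (Q (X t))⟫ ≤ 0 := htang (X t)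
      have h3 : ⟪X t - Q (X t), b (X t)⟫
          = ⟪X t - Q (X t), b (X t) - b (Q (X t))⟫ + ⟪X t - Q (X t), b (Q (X t))⟫ := by
        rw [inner_sub_right]
        ring
      rw [hF, hgval t]
      simp only
      rw [h3]
      linarith
    have hgcont : ContinuousOn g (Set.Icc 0 T) :=
      ((Metric.continuous_infDist_pt K).comp_continuousOn hXc).pow 2
    have hg0 : g 0 ≤ 0 := by
      rw [hg]
      simp only
      rw [hX0, Metric.infDist_zero_of_mem hx₀]
      norm_num
    have hfreq : ∀ x ∈ Set.Ico 0 T, ∀ r, F x < r →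
        ∃ᶠ z in 𝓝[>] x, (z - x)⁻¹ * (g z - g x) < r := by
      intro x hx r hr
      set ψ : ℝ → ℝ := fun z => ⟪X z - Q (X x), X z - Q (X x)⟫ with hψ
      have hx' : x ∈ Set.Icc 0 T := ⟨hx.1, hx.2.le⟩
      have hdX : HasDerivWithinAt (fun z => X z - Q (X x)) (b (X x)) (Set.Icc 0 T) x :=
        (hX x hx').sub_const (Q (X x))
      have hdψ : HasDerivWithinAt ψ (F x) (Set.Icc 0 T) x := by
        have h := hdX.inner ℝ hdX
        rw [hF]
        simp only
        refine h.congr_deriv ?_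
        rw [real_inner_comm (X x - Q (X x)) (b (X x))]
        ring
      rw [hasDerivWithinAt_iff_tendsto_slope] at hdψ
      have hmono : 𝓝[Set.Ioc x T] x ≤ 𝓝[Set.Icc 0 T \ {x}] x :=
        nhdsWithin_mono _ (fun z hz => ⟨⟨hx.1.trans hz.1.le, hz.2⟩, hz.1.ne'⟩)
      have heq : 𝓝[Set.Ioc x T] x = 𝓝[>] x := nhdsWithin_Ioc_eq_nhdsGT hx.2
      have htend : Filter.Tendsto (slope ψ x) (𝓝[>] x) (𝓝 (F x)) := by
        rw [← heq]
        exact hdψ.mono_left hmono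
      have hev := htend.eventually_lt_const hr
      have hmem : Set.Ioc x T ∈ 𝓝[>] x := Ioc_mem_nhdsGT_of_mem ⟨le_rfl, hx.2⟩
      refine ((hev.and (Filter.eventually_of_mem hmem (fun z hz => hz))).mono ?_).frequently
      rintro z ⟨hslope, hz⟩
      have hzx : 0 < z - x := by
        have := hz.1
        linarith
      have hgz : g z ≤ ψ z := by
        show Metric.infDist (X z) K ^ 2 ≤ ⟪X z - Q (X x), X z - Q (X x)⟫
        rw [real_inner_self_eq_norm_sq]
        have h1 : Metric.infDist (X z) K ≤ ‖X z - Q (X x)‖ := by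
          rw [← dist_eq_norm]
          exact Metric.infDist_le_dist_of_mem (hQK (X x))
        exact pow_le_pow_left₀ Metric.infDist_nonneg h1 2
      have hgx : g x = ψ x := by
        rw [hgval x]
        show ‖X x - Q (X x)‖ ^ 2 = ⟪X x - Q (X x), X x - Q (X x)⟫
        rw [real_inner_self_eq_norm_sq]
      have hsl : slope ψ x z = (z - x)⁻¹ * (ψ z - ψ x) := by
        rw [slope_def_field, div_eq_inv_mul]
      rw [hsl] at hslope
      calc (z - x)⁻¹ * (g z - g x)
          ≤ (z - x)⁻¹ * (ψ z - ψ x) := by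
            apply mul_le_mul_of_nonneg_left _ (inv_nonneg.2 hzx.le)
            rw [hgx]
            linarith
        _ < r := hslope
    have hgron := le_gronwallBound_of_liminf_deriv_right_le (f := g) (f' := F)
      (δ := 0) (K := 2 * L) (ε := 0) (a := 0) (b := T)
      hgcont hfreq hg0 (fun t ht => hbound t)
    intro t ht
    have hgt := hgron t ht
    rw [sub_zero, gronwallBound_ε0_δ0] at hgt
    have h4 : Metric.infDist (X t) K ^ 2 = 0 := le_antisymm hgt (sq_nonneg _)
    have h5 : Metric.infDist (X t) K = 0 := by
      exact pow_eq_zero_iff (two_ne_zero) |>.mp h4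
    exact (hKcl.mem_iff_infDist_zero hne).2 h5
end

section
/- Let C ⊂ ℝ^{d−1} be a convex compact set and K := C × ℝ ⊂ ℝ^d. Let b : ℝ^d → ℝ^d be continuously differentiable, suppose its last component b_d : ℝ^d → ℝ is Lipschitz continuous, and suppose that for every x ∈ ∂K and every s ∈ ℝ^d with ⟨s, y − x⟩ ≤ 0 for all y ∈ K one has ⟨s, b(x)⟩ ≤ 0. Then for every X₀ ∈ K the ordinary differential equation Ẋ(t) = b(X(t)), X(0) = X₀ has a unique solution X defined on all of [0,T], and X(t) ∈ K for every t ∈ [0,T]. -/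
open scoped RealInnerProductSpace
open Set Real Filter Topology

section aux

variable {F : Type*} [NormedAddCommGroup F] [InnerProductSpace ℝ F] [CompleteSpace F]

lemma exists_proj_convex {S : Set F} (hne : S.Nonempty) (hc : IsClosed S) (hconv : Convex ℝ S) :
    ∃ P : F → F, (∀ u, P u ∈ S) ∧ (∀ u, ∀ w ∈ S, ⟪u - P u, w - P u⟫ ≤ 0) ∧
      (∀ u ∈ S, P u = u) ∧ (∀ u v, ‖P u - P v‖ ≤ ‖u - v‖) ∧
      (∀ u, ∀ w ∈ S, ‖u - P u‖ ≤ ‖u - w‖) := by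
  have h := exists_norm_eq_iInf_of_complete_convex hne hc.isComplete hconv
  choose P hPmem hPinf using h
  have hchar : ∀ u, ∀ w ∈ S, ⟪u - P u, w - P u⟫ ≤ 0 := fun u =>
    (norm_eq_iInf_iff_real_inner_le_zero hconv (hPmem u)).1 (hPinf u)
  have hdist : ∀ u, ∀ w ∈ S, ‖u - P u‖ ≤ ‖u - w‖ := by
    intro u w hw
    have h1 : ⟪u - P u, w - P u⟫ ≤ 0 := hchar u w hw
    have h2 : ‖u - w‖ ^ 2 = ‖u - P u‖ ^ 2 - 2 * ⟪u - P u, w - P u⟫ + ‖w - P u‖ ^ 2 := by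
      have : u - w = (u - P u) - (w - P u) := by abel
      rw [this, @norm_sub_sq_real]
    nlinarith [norm_nonneg (u - w), norm_nonneg (u - P u), sq_nonneg (‖w - P u‖)]
  refine ⟨P, hPmem, hchar, ?_, ?_, hdist⟩
  · intro u hu
    have := hdist u u hu
    simp only [sub_self, norm_zero] at this
    have : ‖u - P u‖ = 0 := le_antisymm this (norm_nonneg _)
    rw [norm_eq_zero, sub_eq_zero] at this
    exact this.symm
  · intro u v
    have h1 : ⟪u - P u, P v - P u⟫ ≤ 0 := hchar u _ (hPmem v)
    have h2 : ⟪v - P v, P u - P v⟫ ≤ 0 := hchar v _ (hPmem u)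
    have key : ‖P u - P v‖ ^ 2 ≤ ⟪u - v, P u - P v⟫ := by
      have e : ⟪u - v, P u - P v⟫
          = ⟪u - P u, P u - P v⟫ - ⟪v - P v, P u - P v⟫ + ⟪P u - P v, P u - P v⟫ := by
        have huv : u - v = ((u - P u) - (v - P v)) + (P u - P v) := by abel
        rw [huv, inner_add_left, inner_sub_left]
      have e1 : ⟪u - P u, P u - P v⟫ = - ⟪u - P u, P v - P u⟫ := by
        rw [← inner_neg_right]; congr 1; abel
      rw [e, e1, real_inner_self_eq_norm_sq]
      linarith
    have hin : ⟪u - v, P u - P v⟫ ≤ ‖u - v‖ * ‖P u - P v‖ := real_inner_le_norm _ _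
    rcases eq_or_lt_of_le (norm_nonneg (P u - P v)) with h0 | h0
    · rw [← h0]; exact norm_nonneg _
    · nlinarith
end aux

lemma gronwallBound_mono_time {δ K ε : ℝ} (hδ : 0 ≤ δ) (hK : 0 ≤ K) (hε : 0 ≤ ε)
    {x y : ℝ} (hx : 0 ≤ x) (h : x ≤ y) : gronwallBound δ K ε x ≤ gronwallBound δ K ε y := by
  rcases eq_or_lt_of_le hK with h0 | h0
  · rw [← h0, gronwallBound_K0]
    dsimp only
    nlinarith
  · rw [gronwallBound_of_K_ne_0 (ne_of_gt h0)]
    dsimp only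
    have hexp : Real.exp (K * x) ≤ Real.exp (K * y) := by
      apply Real.exp_le_exp.2; nlinarith
    have h1 : (1:ℝ) ≤ Real.exp (K * x) := by
      rw [← Real.exp_zero]; apply Real.exp_le_exp.2; positivity
    have hdiv : 0 ≤ ε / K := by positivity
    nlinarith

lemma euclid_abs_last_le (n : ℕ) (x : EuclideanSpace ℝ (Fin (n+1))) :
    |x (Fin.last n)| ≤ ‖x‖ := by
  rw [EuclideanSpace.norm_eq]
  have : |x (Fin.last n)| = Real.sqrt (‖x (Fin.last n)‖ ^ 2) := by
    rw [Real.sqrt_sq_eq_abs, abs_norm, Real.norm_eq_abs]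
  rw [this]
  apply Real.sqrt_le_sqrt
  exact Finset.single_le_sum (f := fun i => ‖x i‖ ^ 2) (fun i _ => sq_nonneg _) (Finset.mem_univ _)

lemma euclid_norm_split (n : ℕ) (x : EuclideanSpace ℝ (Fin (n+1)))
    (y : EuclideanSpace ℝ (Fin n)) (hy : ∀ i, y i = x i.castSucc) :
    ‖x‖ ≤ ‖y‖ + |x (Fin.last n)| := by
  rw [EuclideanSpace.norm_eq x, EuclideanSpace.norm_eq y]
  simp only [hy]
  set S := ∑ i : Fin n, ‖x i.castSucc‖ ^ 2 with hS
  have hSnn : 0 ≤ S := Finset.sum_nonneg fun i _ => sq_nonneg _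
  have hsum : ∑ i : Fin (n+1), ‖x i‖ ^ 2 = S + ‖x (Fin.last n)‖ ^ 2 := by
    rw [hS, Fin.sum_univ_castSucc]
  rw [hsum]
  have h1 : Real.sqrt (S + ‖x (Fin.last n)‖ ^ 2) ≤ Real.sqrt ((Real.sqrt S + |x (Fin.last n)|) ^ 2) := by
    apply Real.sqrt_le_sqrt
    have := Real.sq_sqrt hSnn
    have habs : ‖x (Fin.last n)‖ ^ 2 = |x (Fin.last n)| ^ 2 := by
      rw [Real.norm_eq_abs]
    nlinarith [Real.sqrt_nonneg S, abs_nonneg (x (Fin.last n))]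
  rw [Real.sqrt_sq (by positivity)] at h1
  exact h1

lemma hasDerivWithinAt_Ici_of_Icc {E : Type*} [NormedAddCommGroup E] [NormedSpace ℝ E]
    {f : ℝ → E} {v : E} {T t : ℝ} (ht0 : 0 ≤ t) (htT : t < T)
    (h : HasDerivWithinAt f v (Set.Icc 0 T) t) : HasDerivWithinAt f v (Set.Ici t) t := by
  apply h.mono_of_mem_nhdsWithin
  rw [mem_nhdsWithin]
  exact ⟨Set.Iio T, isOpen_Iio, htT, fun z hz => ⟨le_trans ht0 hz.2, hz.1.le⟩⟩

lemma compact_norm_bound {α E : Type*} [TopologicalSpace α] [NormedAddCommGroup E]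
    {s : Set α} (hs : IsCompact s) {f : α → E} (hf : ContinuousOn f s) :
    ∃ M : ℝ, 0 ≤ M ∧ ∀ x ∈ s, ‖f x‖ ≤ M := by
  obtain ⟨M, hM⟩ := (hs.image_of_continuousOn hf).isBounded.exists_norm_le
  exact ⟨max M 0, le_max_right _ _,
    fun x hx => le_trans (hM _ (Set.mem_image_of_mem f hx)) (le_max_left _ _)⟩

set_option maxHeartbeats 1000000 in
/-- Deterministic case of the paper's viability corollary: if `C ⊆ ℝ^{d-1}` is
convex and compact, `K = C × ℝ ⊆ ℝ^d`, `b` is `C¹` with Lipschitz last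
component, and `b` satisfies the normal-cone tangency condition on `∂K`, then
for every initial condition in `K` the ODE `Ẋ = b(X)` has a unique solution on
all of `[0,T]`, and this solution stays in `K`. -/
theorem ode_viability_corollary_compact_times_line
    (n : ℕ) (T : ℝ) (hT : 0 < T)
    (C : Set (EuclideanSpace ℝ (Fin n))) (hCconv : Convex ℝ C) (hCcomp : IsCompact C)
    (K : Set (EuclideanSpace ℝ (Fin (n + 1))))
    (hK : ∀ x : EuclideanSpace ℝ (Fin (n + 1)),
      x ∈ K ↔ (WithLp.toLp 2 (fun i : Fin n => x i.castSucc) : EuclideanSpace ℝ (Fin n)) ∈ C)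
    (b : EuclideanSpace ℝ (Fin (n + 1)) → EuclideanSpace ℝ (Fin (n + 1)))
    (hb : ContDiff ℝ 1 b)
    (L : NNReal) (hbd : LipschitzWith L (fun x => b x (Fin.last n)))
    (htang : ∀ x ∈ frontier K, ∀ s : EuclideanSpace ℝ (Fin (n + 1)),
        (∀ y ∈ K, ⟪s, y - x⟫ ≤ 0) → ⟪s, b x⟫ ≤ 0) :
    ∀ X₀ ∈ K,
      (∃ X : ℝ → EuclideanSpace ℝ (Fin (n + 1)), X 0 = X₀ ∧
        (∀ t ∈ Set.Icc 0 T, HasDerivWithinAt X (b (X t)) (Set.Icc 0 T) t) ∧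
        (∀ t ∈ Set.Icc 0 T, X t ∈ K)) ∧
      (∀ X Y : ℝ → EuclideanSpace ℝ (Fin (n + 1)),
        (X 0 = X₀ ∧ ∀ t ∈ Set.Icc 0 T, HasDerivWithinAt X (b (X t)) (Set.Icc 0 T) t) →
        (Y 0 = X₀ ∧ ∀ t ∈ Set.Icc 0 T, HasDerivWithinAt Y (b (Y t)) (Set.Icc 0 T) t) →
        Set.EqOn X Y (Set.Icc 0 T)) := by
  intro X₀ hX₀
  classical
  -- truncation map
  set Pr : EuclideanSpace ℝ (Fin (n+1)) →L[ℝ] EuclideanSpace ℝ (Fin n) :=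
    ((EuclideanSpace.equiv (Fin n) ℝ).symm : (Fin n → ℝ) →L[ℝ] EuclideanSpace ℝ (Fin n)).comp
      (ContinuousLinearMap.pi fun i : Fin n =>
        EuclideanSpace.proj (i.castSucc : Fin (n+1))) with hPrdef
  have hPrx : ∀ x : EuclideanSpace ℝ (Fin (n+1)),
      Pr x = (WithLp.toLp 2 (fun i : Fin n => x i.castSucc) : EuclideanSpace ℝ (Fin n)) :=
    fun x => rfl
  have hKeq : K = Pr ⁻¹' C := by
    ext x; rw [hK x, Set.mem_preimage, hPrx x]
  have hKcl : IsClosed K := by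
    rw [hKeq]; exact hCcomp.isClosed.preimage Pr.continuous
  have hKconv : Convex ℝ K := by
    rw [hKeq]; exact hCconv.linear_preimage (Pr : EuclideanSpace ℝ (Fin (n+1)) →ₗ[ℝ] EuclideanSpace ℝ (Fin n))
  have hKmem : ∀ x, x ∈ K ↔ Pr x ∈ C := by
    intro x; rw [hKeq]; rfl
  constructor
  · -- existence and viability
    -- projection onto K
    obtain ⟨P, hPmem, hPchar, hPid, hPlip, hPdist⟩ := exists_proj_convex ⟨X₀, hX₀⟩ hKcl hKconv
    have hPfront : ∀ u, u ∉ K → P u ∈ frontier K := by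
      intro u hu
      rw [hKcl.frontier_eq]
      refine ⟨hPmem u, fun hint => ?_⟩
      rw [mem_interior_iff_mem_nhds, Metric.mem_nhds_iff] at hint
      obtain ⟨ε, hε, hball⟩ := hint
      have hne : u ≠ P u := fun h => hu (h ▸ hPmem u)
      have hd : 0 < ‖u - P u‖ := by rwa [norm_pos_iff, sub_ne_zero]
      set θ := min (ε / (2 * ‖u - P u‖)) 1 with hθ
      have hθpos : 0 < θ := lt_min (by positivity) one_pos
      have hy : P u + θ • (u - P u) ∈ K := by
        apply hball
        rw [Metric.mem_ball, dist_eq_norm]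
        have h2 : P u + θ • (u - P u) - P u = θ • (u - P u) := by abel
        rw [h2, norm_smul, Real.norm_eq_abs, abs_of_pos hθpos]
        calc θ * ‖u - P u‖ ≤ (ε / (2 * ‖u - P u‖)) * ‖u - P u‖ :=
              mul_le_mul_of_nonneg_right (min_le_left _ _) hd.le
          _ = ε / 2 := by field_simp
          _ < ε := by linarith
      have hc := hPchar u _ hy
      rw [add_sub_cancel_left, real_inner_smul_right, real_inner_self_eq_norm_sq] at hc
      nlinarith [mul_pos hθpos (pow_pos hd 2)]
    -- constants
    obtain ⟨B, hBnn, hBC⟩ : ∃ B : ℝ, 0 ≤ B ∧ ∀ c ∈ C, ‖c‖ ≤ B := by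
      obtain ⟨B0, hB0⟩ := hCcomp.isBounded.exists_norm_le
      exact ⟨max B0 0, le_max_right _ _, fun c hc => le_trans (hB0 c hc) (le_max_left _ _)⟩
    set δ : ℝ := |X₀ (Fin.last n)| with hδdef
    have hδnn : 0 ≤ δ := abs_nonneg _
    set ε₀ : ℝ := |b 0 (Fin.last n)| + L * B with hε₀def
    have hε₀nn : 0 ≤ ε₀ := by positivity
    set R₁ : ℝ := gronwallBound δ L ε₀ T with hR₁def
    have hR₁mono : ∀ t ∈ Set.Icc (0:ℝ) T, gronwallBound δ L ε₀ t ≤ R₁ :=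
      fun t ht => gronwallBound_mono_time hδnn L.coe_nonneg hε₀nn ht.1 ht.2
    have hδR₁ : δ ≤ R₁ := by
      have := gronwallBound_mono_time hδnn L.coe_nonneg hε₀nn (le_refl (0:ℝ)) hT.le
      rwa [gronwallBound_x0] at this
    have hR₁nn : 0 ≤ R₁ := le_trans hδnn hδR₁
    set R₀ : ℝ := B + R₁ with hR₀def
    have hR₀nn : 0 ≤ R₀ := by positivity
    have hKnorm : ∀ x ∈ K, ‖x‖ ≤ B + |x (Fin.last n)| := by
      intro x hx
      have h1 := euclid_norm_split n x (Pr x) (fun i => rfl)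
      have h2 : ‖Pr x‖ ≤ B := hBC _ ((hKmem x).1 hx)
      linarith
    have hX₀le : ‖X₀‖ ≤ R₀ := le_trans (hKnorm X₀ hX₀) (by rw [hR₀def]; linarith)
    set R : ℝ := R₀ + 1 with hRdef
    have hRpos : 0 < R := by positivity
    -- projection onto ball
    obtain ⟨Q, hQmem, hQchar, hQid, hQlip, hQdist⟩ :=
      exists_proj_convex ⟨(0 : EuclideanSpace ℝ (Fin (n+1))),
        Metric.mem_closedBall_self hRpos.le⟩ Metric.isClosed_closedBall (convex_closedBall _ _)
    have hQfix : ∀ x, ‖x‖ ≤ R → Q x = x := fun x hx =>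
      hQid x (mem_closedBall_zero_iff.2 hx)
    have hQnorm : ∀ x, ‖Q x‖ ≤ R := fun x => mem_closedBall_zero_iff.1 (hQmem x)
    set R' : ℝ := R + 2 * ‖X₀‖ with hR'def
    set D : Set (EuclideanSpace ℝ (Fin (n+1))) := K ∩ Metric.closedBall 0 R' with hDdef
    have hPQmem : ∀ x, P (Q x) ∈ D := by
      intro x
      refine ⟨hPmem _, mem_closedBall_zero_iff.2 ?_⟩
      have h1 : ‖P (Q x) - X₀‖ ≤ ‖Q x - X₀‖ := by
        have := hPlip (Q x) X₀
        rwa [hPid X₀ hX₀] at this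
      have h2 : ‖Q x - X₀‖ ≤ ‖Q x‖ + ‖X₀‖ := norm_sub_le _ _
      have h3 : ‖P (Q x)‖ ≤ ‖P (Q x) - X₀‖ + ‖X₀‖ := by
        calc ‖P (Q x)‖ = ‖P (Q x) - X₀ + X₀‖ := by congr 1; abel
          _ ≤ ‖P (Q x) - X₀‖ + ‖X₀‖ := norm_add_le _ _
      have := hQnorm x
      rw [hR'def]; linarith
    have hDcomp : IsCompact D := (isCompact_closedBall 0 R').inter_left hKcl
    have hDconv : Convex ℝ D := hKconv.inter (convex_closedBall _ _)
    -- Lipschitz bound for b on D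
    have hbdiff : Differentiable ℝ b := hb.differentiable one_ne_zero
    obtain ⟨M₀, hM₀nn, hM₀⟩ := compact_norm_bound hDcomp
      ((hb.continuous_fderiv one_ne_zero).continuousOn (s := D))
    set M₁ : NNReal := Real.toNNReal M₀ with hM₁def
    have hbD : LipschitzOnWith M₁ b D := by
      apply hDconv.lipschitzOnWith_of_nnnorm_hasFDerivWithin_le
        (f' := fun x => fderiv ℝ b x)
        (fun x _ => (hbdiff x).hasFDerivAt.hasFDerivWithinAt)
      intro x hx
      have h1 : ‖fderiv ℝ b x‖ ≤ (M₁ : ℝ) := (hM₀ x hx).trans (Real.le_coe_toNNReal M₀)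
      exact_mod_cast h1
    set btil : EuclideanSpace ℝ (Fin (n+1)) → EuclideanSpace ℝ (Fin (n+1)) :=
      fun x => b (P (Q x)) with hbtildef
    have hbtilLip : LipschitzWith M₁ btil := by
      apply LipschitzWith.of_dist_le_mul
      intro x y
      have h1 : dist (btil x) (btil y) ≤ M₁ * dist (P (Q x)) (P (Q y)) :=
        hbD.dist_le_mul _ (hPQmem x) _ (hPQmem y)
      have h2 : dist (P (Q x)) (P (Q y)) ≤ dist (Q x) (Q y) := by
        rw [dist_eq_norm, dist_eq_norm]; exact hPlip _ _
      have h3 : dist (Q x) (Q y) ≤ dist x y := by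
        rw [dist_eq_norm, dist_eq_norm]; exact hQlip _ _
      calc dist (btil x) (btil y) ≤ M₁ * dist (P (Q x)) (P (Q y)) := h1
        _ ≤ M₁ * dist x y := by
            apply mul_le_mul_of_nonneg_left (le_trans h2 h3) M₁.coe_nonneg
    obtain ⟨M₂, hM₂nn, hM₂⟩ := compact_norm_bound hDcomp hb.continuous.continuousOn
    have hbtilBound : ∀ x, ‖btil x‖ ≤ M₂ := fun x => hM₂ _ (hPQmem x)
    -- global solution of the modified ODE
    have hpl : IsPicardLindelof (fun _ x => btil x) (tmin := 0) (tmax := T) ⟨0, le_rfl, hT.le⟩ X₀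
        ((⟨M₂, hM₂nn⟩ : NNReal) * (⟨T, hT.le⟩ : NNReal)) 0 ⟨M₂, hM₂nn⟩ M₁ :=
      { lipschitzOnWith := fun t _ => hbtilLip.lipschitzOnWith
        continuousOn := fun x _ => continuousOn_const
        norm_le := fun t _ x _ => hbtilBound x
        mul_max_le := by
          simp [max_eq_left hT.le]
          exact le_rfl }
    obtain ⟨Y, hY0, hYd⟩ : ∃ Y : ℝ → EuclideanSpace ℝ (Fin (n+1)), Y 0 = X₀ ∧
        ∀ t ∈ Set.Icc 0 T, HasDerivWithinAt Y (btil (Y t)) (Set.Icc 0 T) t :=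
      hpl.exists_eq_forall_mem_Icc_hasDerivWithinAt₀
    have hYcont : ContinuousOn Y (Set.Icc 0 T) := fun t ht =>
      (hYd t ht).continuousWithinAt
    -- the key step : norm control implies viability and better norm control
    have hPcont : Continuous P := by
      apply (LipschitzWith.of_dist_le_mul (K := 1) (f := P) ?_).continuous
      intro u v
      rw [dist_eq_norm, dist_eq_norm, NNReal.coe_one, one_mul]
      exact hPlip u v
    have step : ∀ t'' ∈ Set.Icc (0:ℝ) T, (∀ s ∈ Set.Icc 0 t'', ‖Y s‖ ≤ R) →
        ∀ s ∈ Set.Icc 0 t'', Y s ∈ K ∧ ‖Y s‖ ≤ R₀ := by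
      intro t'' ht'' hnorm
      have hsub : Set.Icc (0:ℝ) t'' ⊆ Set.Icc 0 T := Set.Icc_subset_Icc le_rfl ht''.2
      -- viability on [0, t'']
      have hviab : ∀ s ∈ Set.Icc (0:ℝ) t'', Y s ∈ K := by
        have key := le_gronwallBound_of_liminf_deriv_right_le
          (f := fun s => ‖Y s - P (Y s)‖ ^ 2)
          (f' := fun s => 2 * ⟪Y s - P (Y s), btil (Y s)⟫)
          (δ := 0) (K := 0) (ε := 0) (a := 0) (b := t'')
          ((((hYcont.mono hsub).sub (hPcont.comp_continuousOn (hYcont.mono hsub))).norm).pow 2)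
          ?_ ?_ ?_
        · intro s hs
          have h0 : ‖Y s - P (Y s)‖ ^ 2 ≤ gronwallBound 0 0 0 (s - 0) := key s hs
          rw [sub_zero, gronwallBound_ε0_δ0] at h0
          have h1 : ‖Y s - P (Y s)‖ = 0 := by
            nlinarith [norm_nonneg (Y s - P (Y s)), sq_nonneg (‖Y s - P (Y s)‖)]
          rw [norm_eq_zero, sub_eq_zero] at h1
          rw [h1]
          exact hPmem _
        · -- liminf slope condition
          intro x hx r hr
          have hxT : x < T := lt_of_lt_of_le hx.2 ht''.2
          have hYx : HasDerivWithinAt Y (btil (Y x)) (Set.Icc 0 T) x := hYd x ⟨hx.1, hxT.le⟩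
          set c := P (Y x) with hcdef
          have hg : HasDerivWithinAt (fun z => ⟪Y z - c, Y z - c⟫)
              (2 * ⟪Y x - c, btil (Y x)⟫) (Set.Icc 0 T) x := by
            have h2 := HasDerivWithinAt.inner (𝕜 := ℝ)
              (hYx.sub_const c) (hYx.sub_const c)
            refine h2.congr_deriv ?_
            rw [real_inner_comm (btil (Y x)) (Y x - c)]
            ring
          have hle : 𝓝[>] x ≤ 𝓝[Set.Icc 0 T \ {x}] x := by
            have h3 : 𝓝[>] x = 𝓝[Set.Ioi x ∩ Set.Iio T] x :=
              (nhdsWithin_inter_of_mem'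
                (mem_nhdsWithin_of_mem_nhds (Iio_mem_nhds hxT))).symm
            rw [h3]
            apply nhdsWithin_mono
            rintro z ⟨hz1, hz2⟩
            exact ⟨⟨le_trans hx.1 (le_of_lt hz1), hz2.le⟩, ne_of_gt hz1⟩
          have htend : Tendsto (slope (fun z => ⟪Y z - c, Y z - c⟫) x) (𝓝[>] x)
              (𝓝 (2 * ⟪Y x - c, btil (Y x)⟫)) :=
            (hasDerivWithinAt_iff_tendsto_slope.1 hg).mono_left hle
          have hev1 : ∀ᶠ z in 𝓝[>] x, slope (fun z => ⟪Y z - c, Y z - c⟫) x z < r :=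
            htend.eventually_lt_const hr
          have hev2 : ∀ᶠ z in 𝓝[>] x, x < z := eventually_mem_nhdsWithin
          refine ((hev1.and hev2).frequently).mono ?_
          rintro z ⟨hz1, hz2⟩
          have hzx : 0 < z - x := sub_pos.2 hz2
          have hfz : ‖Y z - P (Y z)‖ ^ 2 ≤ ⟪Y z - c, Y z - c⟫ := by
            rw [real_inner_self_eq_norm_sq]
            have := hPdist (Y z) c (hPmem (Y x))
            nlinarith [norm_nonneg (Y z - P (Y z))]
          have hfx : ‖Y x - P (Y x)‖ ^ 2 = ⟪Y x - c, Y x - c⟫ := by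
            rw [real_inner_self_eq_norm_sq, hcdef]
          rw [slope_def_field] at hz1
          have h4 : (z - x)⁻¹ * (‖Y z - P (Y z)‖ ^ 2 - ‖Y x - P (Y x)‖ ^ 2)
              ≤ (z - x)⁻¹ * (⟪Y z - c, Y z - c⟫ - ⟪Y x - c, Y x - c⟫) := by
            apply mul_le_mul_of_nonneg_left _ (inv_nonneg.2 hzx.le)
            rw [hfx]
            linarith
          calc (z - x)⁻¹ * (‖Y z - P (Y z)‖ ^ 2 - ‖Y x - P (Y x)‖ ^ 2)
              ≤ (z - x)⁻¹ * (⟪Y z - c, Y z - c⟫ - ⟪Y x - c, Y x - c⟫) := h4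
            _ = (⟪Y z - c, Y z - c⟫ - ⟪Y x - c, Y x - c⟫) / (z - x) := by
                rw [div_eq_inv_mul]
            _ < r := hz1
        · -- initial value
          show ‖Y 0 - P (Y 0)‖ ^ 2 ≤ 0
          rw [hY0, hPid X₀ hX₀, sub_self, norm_zero]
          norm_num
        · -- the tangency bound : f' ≤ 0
          intro x hx
          rw [zero_mul, zero_add]
          have hxIcc : x ∈ Set.Icc (0:ℝ) t'' := ⟨hx.1, hx.2.le⟩
          have huR : ‖Y x‖ ≤ R := hnorm x hxIcc
          have hbtileq : btil (Y x) = b (P (Y x)) := by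
            show b (P (Q (Y x))) = b (P (Y x))
            rw [hQfix _ huR]
          rw [hbtileq]
          by_cases hu : Y x ∈ K
          · rw [hPid _ hu, sub_self]
            rw [inner_zero_left]
            norm_num
          · have hfr := hPfront _ hu
            have htan := htang (P (Y x)) hfr (Y x - P (Y x))
              (fun y hy => hPchar (Y x) y hy)
            linarith
      -- Gronwall estimate on the last coordinate
      have hw : ∀ s ∈ Set.Icc (0:ℝ) t'', |Y s (Fin.last n)| ≤ R₁ := by
        have key := norm_le_gronwallBound_of_norm_deriv_right_le
          (f := fun s => Y s (Fin.last n)) (f' := fun s => btil (Y s) (Fin.last n))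
          (δ := δ) (K := L) (ε := ε₀) (a := 0) (b := t'')
          ?_ ?_ ?_ ?_
        · intro s hs
          have h : ‖Y s (Fin.last n)‖ ≤ gronwallBound δ (↑L) ε₀ (s - 0) := key s hs
          rw [Real.norm_eq_abs] at h
          rw [sub_zero] at h
          exact h.trans (hR₁mono s ⟨hs.1, hs.2.trans ht''.2⟩)
        · show ContinuousOn ((EuclideanSpace.proj (Fin.last n)) ∘ Y) (Set.Icc 0 t'')
          exact (EuclideanSpace.proj (Fin.last n)).continuous.comp_continuousOn
            (hYcont.mono hsub)
        · intro s hs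
          have h1 : HasDerivWithinAt Y (btil (Y s)) (Set.Icc 0 T) s :=
            hYd s ⟨hs.1, (lt_of_lt_of_le hs.2 ht''.2).le⟩
          have h2 := hasDerivWithinAt_Ici_of_Icc hs.1 (lt_of_lt_of_le hs.2 ht''.2) h1
          exact (EuclideanSpace.proj (Fin.last n)).hasFDerivAt.comp_hasDerivWithinAt s h2
        · show ‖Y 0 (Fin.last n)‖ ≤ δ
          rw [hY0, Real.norm_eq_abs]
        · intro s hs
          dsimp only
          have hsIcc : s ∈ Set.Icc (0:ℝ) t'' := ⟨hs.1, hs.2.le⟩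
          have hYK : Y s ∈ K := hviab s hsIcc
          have hYR : ‖Y s‖ ≤ R := hnorm s hsIcc
          have heq2 : btil (Y s) = b (Y s) := by
            show b (P (Q (Y s))) = b (Y s)
            rw [hQfix _ hYR, hPid _ hYK]
          rw [heq2, Real.norm_eq_abs, Real.norm_eq_abs]
          have hlip : |b (Y s) (Fin.last n) - b 0 (Fin.last n)| ≤ L * ‖Y s‖ := by
            have h5 := hbd.dist_le_mul (Y s) 0
            rwa [Real.dist_eq, dist_zero_right] at h5
          have hYnorm : ‖Y s‖ ≤ B + |Y s (Fin.last n)| := hKnorm _ hYK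
          have h6 : |b (Y s) (Fin.last n)| ≤ |b 0 (Fin.last n)| + L * ‖Y s‖ := by
            have := abs_sub_abs_le_abs_sub (b (Y s) (Fin.last n)) (b 0 (Fin.last n))
            linarith
          have h7 : (L : ℝ) * ‖Y s‖ ≤ L * (B + |Y s (Fin.last n)|) :=
            mul_le_mul_of_nonneg_left hYnorm L.coe_nonneg
          rw [hε₀def]
          nlinarith [L.coe_nonneg]
      intro s hs
      refine ⟨hviab s hs, ?_⟩
      have := hKnorm _ (hviab s hs)
      have := hw s hs
      rw [hR₀def]
      linarith
    -- no explosion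
    have hgood : ∀ t ∈ Set.Icc (0:ℝ) T, ‖Y t‖ ≤ R₀ := by
      by_contra hcon
      push_neg at hcon
      obtain ⟨t₁, ht₁, ht₁bad⟩ := hcon
      set Bad := {t : ℝ | t ∈ Set.Icc 0 T ∧ R₀ < ‖Y t‖} with hBaddef
      have hBadne : Bad.Nonempty := ⟨t₁, ht₁, ht₁bad⟩
      have hBadbdd : BddBelow Bad := ⟨0, fun t ht => ht.1.1⟩
      set τ := sInf Bad with hτdef
      have hτmem : τ ∈ Set.Icc (0:ℝ) T :=
        ⟨le_csInf hBadne (fun t ht => ht.1.1),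
         le_trans (csInf_le hBadbdd ⟨ht₁, ht₁bad⟩) ht₁.2⟩
      have hgoodlt : ∀ s, 0 ≤ s → s < τ → ‖Y s‖ ≤ R₀ := by
        intro s hs0 hsτ
        by_contra hbad
        push_neg at hbad
        have hsBad : s ∈ Bad := ⟨⟨hs0, le_trans hsτ.le hτmem.2⟩, hbad⟩
        exact absurd (csInf_le hBadbdd hsBad) (not_le.2 hsτ)
      have hτle : ‖Y τ‖ ≤ R₀ := by
        rcases eq_or_lt_of_le hτmem.1 with h0 | h0
        · rw [← h0, hY0]; exact hX₀le
        · have hcw : ContinuousWithinAt (fun s => ‖Y s‖) (Set.Ico 0 τ) τ :=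
            ((hYcont.norm) τ hτmem).mono
              (Set.Ico_subset_Icc_self.trans (Set.Icc_subset_Icc le_rfl hτmem.2))
          have hne : (𝓝[Set.Ico (0:ℝ) τ] τ).NeBot := by
            rw [← mem_closure_iff_nhdsWithin_neBot, closure_Ico (ne_of_lt h0)]
            exact ⟨h0.le, le_rfl⟩
          exact le_of_tendsto hcw
            (eventually_mem_nhdsWithin.mono (fun s hs => hgoodlt s hs.1 hs.2))
      have hcw2 : ContinuousWithinAt (fun s => ‖Y s‖) (Set.Icc 0 T) τ :=
        (hYcont.norm) τ hτmem
      have hev : ∀ᶠ s in 𝓝[Set.Icc (0:ℝ) T] τ, ‖Y s‖ < R :=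
        hcw2.eventually_lt_const (lt_of_le_of_lt hτle (by rw [hRdef]; linarith))
      obtain ⟨η, hηpos, hη⟩ := Metric.mem_nhdsWithin_iff.1 hev
      obtain ⟨t₂, ht₂Bad, ht₂lt⟩ := (csInf_lt_iff hBadbdd hBadne).1
        (by rw [← hτdef]; linarith : sInf Bad < τ + η)
      have ht₂T : t₂ ∈ Set.Icc (0:ℝ) T := ht₂Bad.1
      have ht₂τ : τ ≤ t₂ := csInf_le hBadbdd ht₂Bad
      have hallR : ∀ s ∈ Set.Icc (0:ℝ) t₂, ‖Y s‖ ≤ R := by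
        intro s hs
        rcases lt_or_ge s τ with h | h
        · exact (hgoodlt s hs.1 h).trans (by rw [hRdef]; linarith)
        · have hsball : s ∈ Metric.ball τ η ∩ Set.Icc 0 T := by
            constructor
            · rw [Metric.mem_ball, Real.dist_eq, abs_lt]
              constructor <;> [linarith; linarith [hs.2, ht₂lt]]
            · exact ⟨hs.1, hs.2.trans ht₂T.2⟩
          exact (hη hsball).le
      have hcontr := (step t₂ ht₂T hallR t₂ ⟨ht₂Bad.1.1, le_rfl⟩).2
      exact absurd hcontr (not_le.2 ht₂Bad.2)
    have hmem : ∀ t ∈ Set.Icc (0:ℝ) T, Y t ∈ K := fun t ht =>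
      (step T ⟨hT.le, le_rfl⟩ (fun s hs => le_trans (hgood s hs) (by rw [hRdef]; linarith)) t ht).1
    refine ⟨Y, hY0, ?_, hmem⟩
    intro t ht
    have heq : btil (Y t) = b (Y t) := by
      show b (P (Q (Y t))) = b (Y t)
      rw [hQfix _ (le_trans (hgood t ht) (by rw [hRdef]; linarith)), hPid _ (hmem t ht)]
    rw [← heq]
    exact hYd t ht
  · -- uniqueness
    intro X Y hX hY
    obtain ⟨hX0, hX'⟩ := hX
    obtain ⟨hY0, hY'⟩ := hY
    have hXc : ContinuousOn X (Set.Icc 0 T) := fun t ht => (hX' t ht).continuousWithinAt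
    have hYc : ContinuousOn Y (Set.Icc 0 T) := fun t ht => (hY' t ht).continuousWithinAt
    obtain ⟨ρ, hρnn, hρ⟩ : ∃ ρ : ℝ, 0 ≤ ρ ∧
        ∀ t ∈ Set.Icc 0 T, ‖X t‖ ≤ ρ ∧ ‖Y t‖ ≤ ρ := by
      obtain ⟨ρ₁, _, h1⟩ := compact_norm_bound isCompact_Icc hXc
      obtain ⟨ρ₂, _, h2⟩ := compact_norm_bound isCompact_Icc hYc
      exact ⟨max ρ₁ ρ₂, le_max_of_le_left ‹0 ≤ ρ₁›,
        fun t ht => ⟨le_trans (h1 t ht) (le_max_left _ _), le_trans (h2 t ht) (le_max_right _ _)⟩⟩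
    set S := Metric.closedBall (0 : EuclideanSpace ℝ (Fin (n+1))) ρ with hSdef
    have hScomp : IsCompact S := isCompact_closedBall _ _
    have hSconv : Convex ℝ S := convex_closedBall _ _
    have hbdiff : Differentiable ℝ b := hb.differentiable one_ne_zero
    obtain ⟨M₀, hM₀nn, hM₀⟩ := compact_norm_bound hScomp
      ((hb.continuous_fderiv one_ne_zero).continuousOn (s := S))
    have hbS : LipschitzOnWith (Real.toNNReal M₀) b S := by
      apply hSconv.lipschitzOnWith_of_nnnorm_hasFDerivWithin_le
        (f' := fun x => fderiv ℝ b x)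
        (fun x _ => (hbdiff x).hasFDerivAt.hasFDerivWithinAt)
      intro x hx
      have h1 : ‖fderiv ℝ b x‖ ≤ ((Real.toNNReal M₀ : NNReal) : ℝ) :=
        (hM₀ x hx).trans (Real.le_coe_toNNReal M₀)
      exact_mod_cast h1
    apply ODE_solution_unique_of_mem_Icc_right
      (v := fun _ x => b x) (s := fun _ => S) (fun _ _ => hbS) hXc
      (fun t ht => hasDerivWithinAt_Ici_of_Icc ht.1 ht.2 (hX' t (Set.mem_Icc_of_Ico ht)))
      (fun t ht => mem_closedBall_zero_iff.2 (hρ t (Set.mem_Icc_of_Ico ht)).1)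
      hYc
      (fun t ht => hasDerivWithinAt_Ici_of_Icc ht.1 ht.2 (hY' t (Set.mem_Icc_of_Ico ht)))
      (fun t ht => mem_closedBall_zero_iff.2 (hρ t (Set.mem_Icc_of_Ico ht)).2)
      (hX0.trans hY0.symm)
end
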